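/- Suppose X, Y, A, B, W are jointly distributed finitely-valued random variables with H(W|X,Y) = 0, I(X,A : Y | W) ≤ δ, H(W|X) ≤ δ, and H(W|A) ≤ δ for some δ ≥ 0. Then I(X:Y) ≤ I(X:Y|B) + I(A:B) + C·δ for some absolute constant C (one may take C = 4). -/

import Mathlib

set_option linter.unusedSectionVars false
set_option maxHeartbeats 1000000


open scoped BigOperators

namespace PaperIngleton

open Classical in
/-- Probability of an event under a pmf `p` on a finite sample space. -/
noncomputable def prob {Ω : Type*} [Fintype Ω] (p : Ω → ℝ) (E : Ω → Prop) : ℝ :=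
  ∑ ω, if E ω then p ω else 0

/-- Shannon entropy of a finitely-valued random variable `X` under pmf `p`. -/
noncomputable def ent {Ω S : Type*} [Fintype Ω] [Fintype S] (p : Ω → ℝ) (X : Ω → S) : ℝ :=
  -∑ s : S, prob p (fun ω => X ω = s) * Real.log (prob p (fun ω => X ω = s))

/-- Conditional entropy `H(X|Y)`. -/
noncomputable def condEnt {Ω S T : Type*} [Fintype Ω] [Fintype S] [Fintype T]
    (p : Ω → ℝ) (X : Ω → S) (Y : Ω → T) : ℝ :=
  ent p (fun ω => (X ω, Y ω)) - ent p Y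

/-- Mutual information `I(X:Y)`. -/
noncomputable def mi {Ω S T : Type*} [Fintype Ω] [Fintype S] [Fintype T]
    (p : Ω → ℝ) (X : Ω → S) (Y : Ω → T) : ℝ :=
  ent p X + ent p Y - ent p (fun ω => (X ω, Y ω))

/-- Conditional mutual information `I(X:Y|Z)`. -/
noncomputable def cmi {Ω S T U : Type*} [Fintype Ω] [Fintype S] [Fintype T] [Fintype U]
    (p : Ω → ℝ) (X : Ω → S) (Y : Ω → T) (Z : Ω → U) : ℝ :=
  ent p (fun ω => (X ω, Z ω)) + ent p (fun ω => (Y ω, Z ω))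
    - ent p (fun ω => (X ω, Y ω, Z ω)) - ent p Z

end PaperIngleton

namespace PaperIngleton

section Lemmas
variable {Ω S T U : Type} [Fintype Ω] [Fintype S] [Fintype T] [Fintype U] (p : Ω → ℝ)

variable {Ω S T U : Type} [Fintype Ω] [Fintype S] [Fintype T] [Fintype U] (p : Ω → ℝ)

lemma prob_nonneg (hp : ∀ ω, 0 ≤ p ω) (E : Ω → Prop) : 0 ≤ prob p E := by
  classical
  unfold prob
  exact Finset.sum_nonneg fun ω _ => by split <;> simp [hp ω]

lemma prob_mono (hp : ∀ ω, 0 ≤ p ω) {E E' : Ω → Prop} (h : ∀ ω, E ω → E' ω) :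
    prob p E ≤ prob p E' := by
  classical
  unfold prob
  apply Finset.sum_le_sum
  intro ω _
  by_cases hE : E ω
  · simp [hE, h ω hE]
  · simp only [hE, if_false]
    split <;> simp [hp ω]

lemma self_le_prob (hp : ∀ ω, 0 ≤ p ω) (X : Ω → S) (ω : Ω) :
    p ω ≤ prob p (fun ω' => X ω' = X ω) := by
  classical
  unfold prob
  have h : p ω = if X ω = X ω then p ω else 0 := by simp
  rw [h]
  exact Finset.single_le_sum (f := fun ω' => if X ω' = X ω then p ω' else 0)
    (fun ω' _ => by split <;> simp [hp ω']) (Finset.mem_univ ω)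

lemma sum_push (F : Ω → S) (g : S → ℝ) :
    ∑ s, prob p (fun ω => F ω = s) * g s = ∑ ω, p ω * g (F ω) := by
  classical
  unfold prob
  simp only [Finset.sum_mul, ite_mul, zero_mul]
  rw [Finset.sum_comm]
  apply Finset.sum_congr rfl
  intro ω _
  simp

lemma sum_prob_eq_one (hp1 : ∑ ω, p ω = 1) (F : Ω → S) :
    ∑ s, prob p (fun ω => F ω = s) = 1 := by
  have h := sum_push p F (fun _ => (1 : ℝ))
  simpa [hp1] using h

lemma ent_omega (X : Ω → S) :
    ent p X = -∑ ω, p ω * Real.log (prob p (fun ω' => X ω' = X ω)) := by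
  unfold ent
  rw [sum_push p X (fun s => Real.log (prob p (fun ω => X ω = s)))]

lemma ent_comp (f : S → T) (hf : Function.Injective f) (X : Ω → S) :
    ent p (fun ω => f (X ω)) = ent p X := by
  rw [ent_omega, ent_omega]
  congr 1
  apply Finset.sum_congr rfl
  intro ω _
  congr 2
  unfold prob
  apply Finset.sum_congr rfl
  intro ω' _
  congr 1
  simp [hf.eq_iff]

lemma marginal (F : Ω → S) (G : Ω → U) (u : U) :
    ∑ s, prob p (fun ω => (F ω, G ω) = (s, u)) = prob p (fun ω => G ω = u) := by
  classical
  unfold prob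
  rw [Finset.sum_comm]
  apply Finset.sum_congr rfl
  intro ω _
  simp only [Prod.ext_iff, ite_and]
  rw [Finset.sum_ite_eq (Finset.univ) (F ω) (fun _ => if G ω = u then p ω else 0)]
  simp

lemma chain_bound (hp : ∀ ω, 0 ≤ p ω) (hp1 : ∑ ω, p ω = 1)
    (X : Ω → S) (Y : Ω → T) (Z : Ω → U) :
    ∑ v : S × T × U, prob p (fun ω => (X ω, Y ω, Z ω) = v) *
      ((prob p (fun ω => (X ω, Z ω) = (v.1, v.2.2)) *
        prob p (fun ω => (Y ω, Z ω) = (v.2.1, v.2.2))) /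
       (prob p (fun ω => (X ω, Y ω, Z ω) = v) * prob p (fun ω => Z ω = v.2.2))) ≤ 1 := by
  classical
  set A : S → U → ℝ := fun x z => prob p (fun ω => (X ω, Z ω) = (x, z)) with hA
  set B : T → U → ℝ := fun y z => prob p (fun ω => (Y ω, Z ω) = (y, z)) with hB
  set C : S × T × U → ℝ := fun v => prob p (fun ω => (X ω, Y ω, Z ω) = v) with hC
  set D : U → ℝ := fun z => prob p (fun ω => Z ω = z) with hD
  have step1 : ∀ v : S × T × U, C v * (A v.1 v.2.2 * B v.2.1 v.2.2 / (C v * D v.2.2))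
      ≤ A v.1 v.2.2 * B v.2.1 v.2.2 / D v.2.2 := by
    intro v
    have hAn : 0 ≤ A v.1 v.2.2 := prob_nonneg p hp _
    have hBn : 0 ≤ B v.2.1 v.2.2 := prob_nonneg p hp _
    have hCn : 0 ≤ C v := prob_nonneg p hp _
    have hDn : 0 ≤ D v.2.2 := prob_nonneg p hp _
    rcases eq_or_lt_of_le hCn with h0 | h0
    · rw [← h0]; simp; positivity
    rcases eq_or_lt_of_le hDn with hd0 | hd0
    · rw [← hd0]; simp
    apply le_of_eq
    field_simp
  have hBm : ∀ z, ∑ y, B y z = D z := fun z => marginal p Y Z z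
  have hAm : ∀ z, ∑ x, A x z = D z := fun z => marginal p X Z z
  have step2 : ∑ v : S × T × U, A v.1 v.2.2 * B v.2.1 v.2.2 / D v.2.2 = 1 := by
    rw [Fintype.sum_prod_type]
    simp only [Fintype.sum_prod_type]
    calc ∑ x, ∑ y, ∑ z, A x z * B y z / D z
        = ∑ x, ∑ z, ∑ y, A x z * B y z / D z := by
          exact Finset.sum_congr rfl fun x _ => Finset.sum_comm
      _ = ∑ x, ∑ z, A x z * D z / D z := by
          apply Finset.sum_congr rfl; intro x _
          apply Finset.sum_congr rfl; intro z _
          rw [← Finset.sum_div, ← Finset.mul_sum, hBm z]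
      _ = ∑ z, ∑ x, A x z * D z / D z := Finset.sum_comm
      _ = ∑ z, D z := by
          apply Finset.sum_congr rfl; intro z _
          rw [← Finset.sum_div, ← Finset.sum_mul, hAm z]
          rcases eq_or_ne (D z) 0 with h | h
          · simp [h]
          · field_simp
      _ = 1 := sum_prob_eq_one p hp1 Z
  calc ∑ v : S × T × U, C v * (A v.1 v.2.2 * B v.2.1 v.2.2 / (C v * D v.2.2))
      ≤ ∑ v : S × T × U, A v.1 v.2.2 * B v.2.1 v.2.2 / D v.2.2 :=
        Finset.sum_le_sum fun v _ => step1 v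
    _ = 1 := step2

lemma condEnt_nonneg (hp : ∀ ω, 0 ≤ p ω) (X : Ω → S) (Y : Ω → T) :
    0 ≤ condEnt p X Y := by
  unfold condEnt
  rw [ent_omega, ent_omega]
  rw [neg_sub_neg, ← Finset.sum_sub_distrib]
  apply Finset.sum_nonneg
  intro ω _
  rw [← mul_sub]
  rcases eq_or_lt_of_le (hp ω) with h0 | h0
  · simp [← h0]
  apply mul_nonneg h0.le
  rw [sub_nonneg]
  apply Real.log_le_log
  · exact lt_of_lt_of_le h0 (self_le_prob p hp _ ω)
  · exact prob_mono p hp fun ω' h => congrArg Prod.snd h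

lemma cmi_nonneg (hp : ∀ ω, 0 ≤ p ω) (hp1 : ∑ ω, p ω = 1)
    (X : Ω → S) (Y : Ω → T) (Z : Ω → U) : 0 ≤ cmi p X Y Z := by
  classical
  set a : Ω → ℝ := fun ω => prob p (fun ω' => (X ω', Z ω') = (X ω, Z ω)) with ha
  set b : Ω → ℝ := fun ω => prob p (fun ω' => (Y ω', Z ω') = (Y ω, Z ω)) with hb
  set c : Ω → ℝ := fun ω => prob p (fun ω' => (X ω', Y ω', Z ω') = (X ω, Y ω, Z ω)) with hc
  set d : Ω → ℝ := fun ω => prob p (fun ω' => Z ω' = Z ω) with hd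
  have key : ∑ ω, p ω * (Real.log (a ω) + Real.log (b ω)
      - Real.log (c ω) - Real.log (d ω)) ≤ 0 := by
    -- termwise bound by p ω * (a b / (c d)) - p ω, then sum
    have hterm : ∀ ω, p ω * (Real.log (a ω) + Real.log (b ω)
        - Real.log (c ω) - Real.log (d ω)) ≤ p ω * (a ω * b ω / (c ω * d ω)) - p ω := by
      intro ω
      rcases eq_or_lt_of_le (hp ω) with h0 | h0
      · simp [← h0]
      have hcpos : 0 < c ω := lt_of_lt_of_le h0 (self_le_prob p hp _ ω)
      have hac : c ω ≤ a ω := prob_mono p hp fun ω' h => by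
        simp only [Prod.ext_iff] at h ⊢; exact ⟨h.1, h.2.2⟩
      have hbc : c ω ≤ b ω := prob_mono p hp fun ω' h => by
        simp only [Prod.ext_iff] at h ⊢; exact ⟨h.2.1, h.2.2⟩
      have hbd : b ω ≤ d ω := prob_mono p hp fun ω' h => by
        simp only [Prod.ext_iff] at h; exact h.2
      have hapos : 0 < a ω := lt_of_lt_of_le hcpos hac
      have hbpos : 0 < b ω := lt_of_lt_of_le hcpos hbc
      have hdpos : 0 < d ω := lt_of_lt_of_le hbpos hbd
      have hratio : 0 < a ω * b ω / (c ω * d ω) := by positivity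
      have hlog := Real.log_le_sub_one_of_pos hratio
      rw [Real.log_div (by positivity) (by positivity), Real.log_mul hapos.ne' hbpos.ne',
        Real.log_mul hcpos.ne' hdpos.ne'] at hlog
      have := mul_le_mul_of_nonneg_left hlog (hp ω)
      calc p ω * (Real.log (a ω) + Real.log (b ω) - Real.log (c ω) - Real.log (d ω))
          = p ω * (Real.log (a ω) + Real.log (b ω) - (Real.log (c ω) + Real.log (d ω))) := by ring
        _ ≤ p ω * (a ω * b ω / (c ω * d ω) - 1) := this
        _ = p ω * (a ω * b ω / (c ω * d ω)) - p ω := by ring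
    calc ∑ ω, p ω * (Real.log (a ω) + Real.log (b ω) - Real.log (c ω) - Real.log (d ω))
        ≤ ∑ ω, (p ω * (a ω * b ω / (c ω * d ω)) - p ω) :=
          Finset.sum_le_sum fun ω _ => hterm ω
      _ = (∑ ω, p ω * (a ω * b ω / (c ω * d ω))) - 1 := by
          rw [Finset.sum_sub_distrib, hp1]
      _ ≤ 1 - 1 := by
          have hmain : ∑ ω, p ω * (a ω * b ω / (c ω * d ω)) ≤ 1 := by
            have h : ∑ v : S × T × U, prob p (fun ω => (X ω, Y ω, Z ω) = v) *
                ((prob p (fun ω => (X ω, Z ω) = (v.1, v.2.2)) *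
                  prob p (fun ω => (Y ω, Z ω) = (v.2.1, v.2.2))) /
                 (prob p (fun ω => (X ω, Y ω, Z ω) = v) * prob p (fun ω => Z ω = v.2.2)))
                = ∑ ω, p ω * (a ω * b ω / (c ω * d ω)) :=
              sum_push p (fun ω => (X ω, Y ω, Z ω)) _
            rw [← h]
            exact chain_bound p hp hp1 X Y Z
          linarith
      _ = 0 := by ring
  have eA : ent p (fun ω => (X ω, Z ω)) = -∑ ω, p ω * Real.log (a ω) := ent_omega p _
  have eB : ent p (fun ω => (Y ω, Z ω)) = -∑ ω, p ω * Real.log (b ω) := ent_omega p _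
  have eC : ent p (fun ω => (X ω, Y ω, Z ω)) = -∑ ω, p ω * Real.log (c ω) := ent_omega p _
  have eD : ent p Z = -∑ ω, p ω * Real.log (d ω) := ent_omega p _
  have hkey2 : (∑ ω, p ω * Real.log (a ω)) + (∑ ω, p ω * Real.log (b ω))
      - (∑ ω, p ω * Real.log (c ω)) - (∑ ω, p ω * Real.log (d ω)) ≤ 0 := by
    calc (∑ ω, p ω * Real.log (a ω)) + (∑ ω, p ω * Real.log (b ω))
        - (∑ ω, p ω * Real.log (c ω)) - (∑ ω, p ω * Real.log (d ω))
        = ∑ ω, p ω * (Real.log (a ω) + Real.log (b ω)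
            - Real.log (c ω) - Real.log (d ω)) := by
          rw [← Finset.sum_add_distrib, ← Finset.sum_sub_distrib, ← Finset.sum_sub_distrib]
          exact Finset.sum_congr rfl fun ω _ => by ring
      _ ≤ 0 := key
  unfold cmi
  rw [eA, eB, eC, eD]
  linarith [hkey2]


end Lemmas

theorem stmt6 {Ω S T U V R : Type} [Fintype Ω] [Fintype S] [Fintype T] [Fintype U]
    [Fintype V] [Fintype R]
    (p : Ω → ℝ) (hp : ∀ ω, 0 ≤ p ω) (hp1 : ∑ ω, p ω = 1)
    (X : Ω → S) (Y : Ω → T) (A : Ω → U) (B : Ω → V) (W : Ω → R)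
    (δ : ℝ) (hδ : 0 ≤ δ)
    (hWXY : condEnt p W (fun ω => (X ω, Y ω)) = 0)
    (hXAY : cmi p (fun ω => (X ω, A ω)) Y W ≤ δ)
    (hWX : condEnt p W X ≤ δ)
    (hWA : condEnt p W A ≤ δ) :
    mi p X Y ≤ cmi p X Y B + mi p A B + 4 * δ := by
  classical
  have h1 := cmi_nonneg p hp hp1 W Y X
  have h2 := cmi_nonneg p hp hp1 A Y (fun ω => (X ω, W ω))
  have h3 := cmi_nonneg p hp hp1 W B Y
  have h4 := cmi_nonneg p hp hp1 A B W
  have h5 := condEnt_nonneg p hp W (fun ω => (A ω, B ω))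
  have h6 := cmi_nonneg p hp hp1 X Y (fun ω => (W ω, B ω))
  have h7 := condEnt_nonneg p hp W (fun ω => (X ω, Y ω, B ω))
  have h8 := cmi_nonneg p hp hp1 W B X
  have g1 := ent_comp p (fun q : S × T => (q.2, q.1))
    (fun a b hab => by cases a; cases b; simp_all [Prod.ext_iff]) (fun ω => (X ω, Y ω))
  have g2 := ent_comp p (fun q : R × S => (q.2, q.1))
    (fun a b hab => by cases a; cases b; simp_all [Prod.ext_iff]) (fun ω => (W ω, X ω))
  have g3 := ent_comp p (fun q : T × R => (q.2, q.1))
    (fun a b hab => by cases a; cases b; simp_all [Prod.ext_iff]) (fun ω => (Y ω, W ω))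
  have g4 := ent_comp p (fun q : U × R => (q.2, q.1))
    (fun a b hab => by cases a; cases b; simp_all [Prod.ext_iff]) (fun ω => (A ω, W ω))
  have g5 := ent_comp p (fun q : R × V => (q.2, q.1))
    (fun a b hab => by cases a; cases b; simp_all [Prod.ext_iff]) (fun ω => (W ω, B ω))
  have g6 := ent_comp p (fun q : T × V => (q.2, q.1))
    (fun a b hab => by cases a; cases b; simp_all [Prod.ext_iff]) (fun ω => (Y ω, B ω))
  have g7 := ent_comp p (fun q : S × V => (q.2, q.1))
    (fun a b hab => by cases a; cases b; simp_all [Prod.ext_iff]) (fun ω => (X ω, B ω))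
  have g8 := ent_comp p (fun q : S × T × R => (q.2.2, q.2.1, q.1))
    (fun a b hab => by cases a; cases b; simp_all [Prod.ext_iff]) (fun ω => (X ω, Y ω, W ω))
  have g9 := ent_comp p (fun q : S × T × R => (q.2.1, q.1, q.2.2))
    (fun a b hab => by cases a; cases b; simp_all [Prod.ext_iff]) (fun ω => (X ω, Y ω, W ω))
  have g10 := ent_comp p (fun q : (S × U) × R => (q.1.2, q.1.1, q.2))
    (fun a b hab => by cases a; cases b; simp_all [Prod.ext_iff]) (fun ω => ((X ω, A ω), W ω))
  have g11 := ent_comp p (fun q : T × R × V => (q.2.1, q.2.2, q.1))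
    (fun a b hab => by cases a; cases b; simp_all [Prod.ext_iff]) (fun ω => (Y ω, W ω, B ω))
  have g12 := ent_comp p (fun q : U × V × R => (q.2.2, q.1, q.2.1))
    (fun a b hab => by cases a; cases b; simp_all [Prod.ext_iff]) (fun ω => (A ω, B ω, W ω))
  have g13 := ent_comp p (fun q : S × R × V => (q.2.1, q.2.2, q.1))
    (fun a b hab => by cases a; cases b; simp_all [Prod.ext_iff]) (fun ω => (X ω, W ω, B ω))
  have g14 := ent_comp p (fun q : (S × U) × (T × R) => (q.1.2, q.2.1, q.1.1, q.2.2))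
    (fun a b hab => by cases a; cases b; simp_all [Prod.ext_iff]) (fun ω => ((X ω, A ω), Y ω, W ω))
  have g15 := ent_comp p (fun q : S × T × R × V => (q.2.2.1, q.1, q.2.1, q.2.2.2))
    (fun a b hab => by cases a; cases b; simp_all [Prod.ext_iff]) (fun ω => (X ω, Y ω, W ω, B ω))
  simp only [] at g1 g2 g3 g4 g5 g6 g7 g8 g9 g10 g11 g12 g13 g14 g15
  simp only [mi, cmi, condEnt] at h1 h2 h3 h4 h5 h6 h7 h8 hXAY hWX hWA ⊢
  linarith [h1, h2, h3, h4, h5, h6, h7, h8, hXAY, hWX, hWA, hδ,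
    g1, g2, g3, g4, g5, g6, g7, g8, g9, g10, g11, g12, g13, g14, g15]

end PaperIngleton
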